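/- arXiv:2203.10478 — 2 statements merged into one kernel-verified Lean document; each statement's English description precedes it below -/
import Mathlib

section
/- For the coproduct r on 'f with r(θ_i)=θ_i⊗1+1⊗θ_i (an algebra map into the twisted tensor product) and the twisted flip ρ(x⊗y)=t^{⟨|y|,|x|⟩−⟨|x|,|y|⟩} y⊗x, one has r(σ(x)) = (σ⊗σ)(ρ(r(x))) for all x ∈ 'f. -/
set_option linter.unusedSectionVars false
set_option maxHeartbeats 1000000

noncomputable section

def wdeg {I : Type*} [DecidableEq I] (w : FreeMonoid I) : I →₀ ℕ :=
  (w.toList.map fun i => Finsupp.single i 1).sum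

def angN {I : Type*} (form : I → I → ℤ) (ν μ : I →₀ ℕ) : ℤ :=
  ν.sum fun i a => μ.sum fun j b => (a : ℤ) * (b : ℤ) * form i j

def dotN {I : Type*} (form : I → I → ℤ) (ν μ : I →₀ ℕ) : ℤ :=
  angN form ν μ + angN form μ ν

abbrev FreeAlg (K : Type*) [Field K] (I : Type*) : Type _ :=
  MonoidAlgebra K (FreeMonoid I)

/-- `'f ⊗ 'f`, realized with basis the pairs of words. -/
abbrev FreeAlg2 (K : Type*) [Field K] (I : Type*) : Type _ :=
  (FreeMonoid I × FreeMonoid I) →₀ K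

def theta {K : Type*} [Field K] {I : Type*} (i : I) : FreeAlg K I :=
  MonoidAlgebra.of K (FreeMonoid I) (FreeMonoid.of i)

def IsHomog {K : Type*} [Field K] {I : Type*} [DecidableEq I]
    (x : FreeAlg K I) (ν : I →₀ ℕ) : Prop :=
  ∀ w ∈ x.coeff.support, wdeg w = ν

/-- The twisted multiplication on `'f ⊗ 'f`:
`(x₁⊗x₂)(y₁⊗y₂) = v^{|y₁|·|x₂|} t^{⟨|y₁|,|x₂|⟩−⟨|x₂|,|y₁|⟩} x₁y₁ ⊗ x₂y₂`. -/
def tmul {I : Type*} [DecidableEq I] {K : Type*} [Field K] (v t : Kˣ) (form : I → I → ℤ)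
    (x y : FreeAlg2 K I) : FreeAlg2 K I :=
  x.sum fun p a => y.sum fun q b =>
    Finsupp.single (p.1 * q.1, p.2 * q.2)
      (a * b *
        ((v ^ dotN form (wdeg q.1) (wdeg p.2) *
          t ^ (angN form (wdeg q.1) (wdeg p.2) - angN form (wdeg p.2) (wdeg q.1)) : Kˣ) : K))

/-- The twisted flip `ρ(x⊗y) = t^{⟨|y|,|x|⟩−⟨|x|,|y|⟩} y⊗x`. -/
def twflip {I : Type*} [DecidableEq I] {K : Type*} [Field K] (t : Kˣ) (form : I → I → ℤ)
    (z : FreeAlg2 K I) : FreeAlg2 K I :=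
  z.sum fun p a =>
    Finsupp.single (p.2, p.1)
      (a * ((t ^ (angN form (wdeg p.2) (wdeg p.1) - angN form (wdeg p.1) (wdeg p.2)) : Kˣ) : K))

/-- `x ⊗ y` as an element of `FreeAlg2`. -/
def outer {I : Type*} {K : Type*} [Field K] (x y : FreeAlg K I) : FreeAlg2 K I :=
  x.coeff.sum fun w c => y.coeff.sum fun u d => Finsupp.single (w, u) (c * d)

/-- `σ ⊗ σ` on `'f ⊗ 'f`. -/
def tensorSigma {I : Type*} {K : Type*} [Field K]
    (σ : FreeAlg K I →ₗ[K] FreeAlg K I) (z : FreeAlg2 K I) : FreeAlg2 K I :=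
  z.sum fun p a => a • outer (σ (MonoidAlgebra.single p.1 1)) (σ (MonoidAlgebra.single p.2 1))

/-! ### Auxiliary lemmas -/

section Aux

variable {I : Type*} [DecidableEq I] {K : Type*} [Field K] (v t : Kˣ) (form : I → I → ℤ)

lemma angN_zero_left (μ : I →₀ ℕ) : angN form 0 μ = 0 := by simp [angN]

lemma angN_zero_right (ν : I →₀ ℕ) : angN form ν 0 = 0 := by simp [angN]

lemma angN_add_left (ν ν' μ : I →₀ ℕ) :
    angN form (ν + ν') μ = angN form ν μ + angN form ν' μ := by
  unfold angN
  rw [Finsupp.sum_add_index' (by simp) ?_]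
  intro a b₁ b₂
  rw [← Finsupp.sum_add]
  congr 1; ext j c; push_cast; ring

lemma angN_add_right (ν μ μ' : I →₀ ℕ) :
    angN form ν (μ + μ') = angN form ν μ + angN form ν μ' := by
  unfold angN
  rw [← Finsupp.sum_add]
  congr 1; ext i a
  rw [Finsupp.sum_add_index' (by simp) (fun a b c => by push_cast; ring)]

lemma dotN_comm (ν μ : I →₀ ℕ) : dotN form ν μ = dotN form μ ν := add_comm _ _

lemma wdeg_one : wdeg (1 : FreeMonoid I) = 0 := rfl

lemma wdeg_mul (w u : FreeMonoid I) : wdeg (w * u) = wdeg w + wdeg u := by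
  simp [wdeg, FreeMonoid.toList_mul]

lemma wdeg_of (i : I) : wdeg (FreeMonoid.of i) = Finsupp.single i 1 := by simp [wdeg]

lemma wdeg_reverse (l : List I) :
    wdeg (FreeMonoid.ofList l.reverse) = wdeg (FreeMonoid.ofList l) := by
  simp only [wdeg, FreeMonoid.toList_ofList, List.map_reverse, List.sum_reverse]

lemma wdeg_rev (w : FreeMonoid I) :
    wdeg (FreeMonoid.ofList w.toList.reverse) = wdeg w := by
  rw [wdeg_reverse, FreeMonoid.ofList_toList]

-- twflip
lemma twflip_single (p : FreeMonoid I × FreeMonoid I) (a : K) :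
    twflip t form (Finsupp.single p a) =
      Finsupp.single (p.2, p.1)
        (a * ((t ^ (angN form (wdeg p.2) (wdeg p.1) - angN form (wdeg p.1) (wdeg p.2)) : Kˣ) : K)) := by
  unfold twflip
  rw [Finsupp.sum_single_index (by simp)]

lemma twflip_zero : twflip t form (0 : FreeAlg2 K I) = 0 := by
  unfold twflip; exact Finsupp.sum_zero_index

lemma twflip_add (z z' : FreeAlg2 K I) :
    twflip t form (z + z') = twflip t form z + twflip t form z' := by
  unfold twflip
  rw [Finsupp.sum_add_index' (by simp) (fun p b₁ b₂ => by rw [add_mul, Finsupp.single_add])]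

lemma twflip_smul (c : K) (z : FreeAlg2 K I) :
    twflip t form (c • z) = c • twflip t form z := by
  unfold twflip
  rw [Finsupp.sum_smul_index (by simp), Finsupp.smul_sum]
  exact Finsupp.sum_congr fun p _ => by rw [Finsupp.smul_single, smul_eq_mul, mul_assoc]

-- outer
lemma outer_single_single (w u : FreeMonoid I) (c d : K) :
    outer (MonoidAlgebra.single w c) (MonoidAlgebra.single u d) = Finsupp.single (w, u) (c * d) := by
  unfold outer
  rw [MonoidAlgebra.coeff_single, MonoidAlgebra.coeff_single]
  rw [Finsupp.sum_single_index (by simp)]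
  rw [Finsupp.sum_single_index (by simp)]

-- tensorSigma
lemma tensorSigma_single (σ : FreeAlg K I →ₗ[K] FreeAlg K I)
    (p : FreeMonoid I × FreeMonoid I) (a : K) :
    tensorSigma σ (Finsupp.single p a) =
      a • outer (σ (MonoidAlgebra.single p.1 1)) (σ (MonoidAlgebra.single p.2 1)) := by
  unfold tensorSigma
  rw [Finsupp.sum_single_index (by simp)]

lemma tensorSigma_zero (σ : FreeAlg K I →ₗ[K] FreeAlg K I) :
    tensorSigma σ (0 : FreeAlg2 K I) = 0 := by
  unfold tensorSigma; exact Finsupp.sum_zero_index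

lemma tensorSigma_add (σ : FreeAlg K I →ₗ[K] FreeAlg K I) (z z' : FreeAlg2 K I) :
    tensorSigma σ (z + z') = tensorSigma σ z + tensorSigma σ z' := by
  unfold tensorSigma
  exact Finsupp.sum_add_index' (by simp) (fun p b₁ b₂ => add_smul _ _ _)

lemma tensorSigma_smul (σ : FreeAlg K I →ₗ[K] FreeAlg K I) (c : K) (z : FreeAlg2 K I) :
    tensorSigma σ (c • z) = c • tensorSigma σ z := by
  unfold tensorSigma
  rw [Finsupp.sum_smul_index (by simp), Finsupp.smul_sum]
  exact Finsupp.sum_congr fun p _ => by rw [mul_smul]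

-- tmul
lemma tmul_single_single (p q : FreeMonoid I × FreeMonoid I) (a b : K) :
    tmul v t form (Finsupp.single p a) (Finsupp.single q b) =
      Finsupp.single (p.1 * q.1, p.2 * q.2)
        (a * b *
          ((v ^ dotN form (wdeg q.1) (wdeg p.2) *
            t ^ (angN form (wdeg q.1) (wdeg p.2) - angN form (wdeg p.2) (wdeg q.1)) : Kˣ) : K)) := by
  unfold tmul
  rw [Finsupp.sum_single_index (by simp)]
  rw [Finsupp.sum_single_index (by simp)]

lemma tmul_zero_left (y : FreeAlg2 K I) : tmul v t form 0 y = 0 := by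
  unfold tmul; exact Finsupp.sum_zero_index

lemma tmul_zero_right (x : FreeAlg2 K I) : tmul v t form x 0 = 0 := by
  unfold tmul
  simp only [Finsupp.sum_zero_index]
  exact Finset.sum_const_zero

lemma tmul_add_left (x x' y : FreeAlg2 K I) :
    tmul v t form (x + x') y = tmul v t form x y + tmul v t form x' y := by
  unfold tmul
  rw [Finsupp.sum_add_index' (by simp) ?_]
  intro p b₁ b₂
  rw [← Finsupp.sum_add]
  exact Finsupp.sum_congr fun q _ => by rw [add_mul, add_mul, Finsupp.single_add]

lemma tmul_add_right (x y y' : FreeAlg2 K I) :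
    tmul v t form x (y + y') = tmul v t form x y + tmul v t form x y' := by
  unfold tmul
  rw [← Finsupp.sum_add]
  refine Finsupp.sum_congr fun p _ => ?_
  rw [Finsupp.sum_add_index' (by simp) (fun q b₁ b₂ => by rw [mul_add, add_mul, Finsupp.single_add])]

lemma tmul_smul_left (c : K) (x y : FreeAlg2 K I) :
    tmul v t form (c • x) y = c • tmul v t form x y := by
  unfold tmul
  rw [Finsupp.sum_smul_index (by simp), Finsupp.smul_sum]
  refine Finsupp.sum_congr fun p _ => ?_
  rw [Finsupp.smul_sum]
  exact Finsupp.sum_congr fun q _ => by rw [Finsupp.smul_single, smul_eq_mul]; ring_nf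

lemma tmul_smul_right (c : K) (x y : FreeAlg2 K I) :
    tmul v t form x (c • y) = c • tmul v t form x y := by
  unfold tmul
  rw [Finsupp.smul_sum]
  refine Finsupp.sum_congr fun p _ => ?_
  rw [Finsupp.sum_smul_index (by simp), Finsupp.smul_sum]
  exact Finsupp.sum_congr fun q _ => by rw [Finsupp.smul_single, smul_eq_mul]; ring_nf

-- basic algebra facts
lemma theta_eq (i : I) : (theta i : FreeAlg K I) = MonoidAlgebra.single (FreeMonoid.of i) 1 := rfl

lemma isHomog_single (w : FreeMonoid I) :
    IsHomog (MonoidAlgebra.single w (1 : K)) (wdeg w) := by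
  intro u hu
  have := Finsupp.support_single_subset hu
  simp only [Finset.mem_singleton] at this
  rw [this]

lemma isHomog_theta (i : I) : IsHomog (theta i : FreeAlg K I) (Finsupp.single i 1) := by
  rw [theta_eq, ← wdeg_of i]
  exact isHomog_single _

def Eexp {I : Type*} [DecidableEq I] (form : I → I → ℤ) : List I → ℤ
  | [] => 0
  | i :: l => Eexp form l + (angN form (wdeg (FreeMonoid.ofList l)) (Finsupp.single i 1)
      - angN form (Finsupp.single i 1) (wdeg (FreeMonoid.ofList l)))

lemma single_cons (i : I) (l : List I) :
    (MonoidAlgebra.single (FreeMonoid.ofList (i :: l)) (1 : K)) =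
      theta i * MonoidAlgebra.single (FreeMonoid.ofList l) 1 := by
  rw [theta_eq, MonoidAlgebra.single_mul_single, one_mul]
  rfl

lemma sigma_ofList (σ : FreeAlg K I →ₗ[K] FreeAlg K I)
    (hσone : σ 1 = 1)
    (hσtheta : ∀ i : I, σ (theta i) = theta i)
    (hσmul : ∀ (x y : FreeAlg K I) (ν μ : I →₀ ℕ), IsHomog x ν → IsHomog y μ →
      σ (x * y) = ((t ^ (angN form μ ν - angN form ν μ) : Kˣ) : K) • (σ y * σ x)) :
    ∀ l : List I,
      σ (MonoidAlgebra.single (FreeMonoid.ofList l) 1) =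
        ((t ^ Eexp form l : Kˣ) : K) • MonoidAlgebra.single (FreeMonoid.ofList l.reverse) (1 : K) := by
  intro l
  induction l with
  | nil =>
      show σ (MonoidAlgebra.single 1 1) = _
      rw [← MonoidAlgebra.one_def, hσone]
      simp [Eexp, MonoidAlgebra.one_def]
  | cons i l ih =>
      rw [single_cons, hσmul (theta i) _ (Finsupp.single i 1) (wdeg (FreeMonoid.ofList l))
        (isHomog_theta i) (isHomog_single _), ih, hσtheta]
      rw [smul_mul_assoc, theta_eq, MonoidAlgebra.single_mul_single, mul_one, smul_smul]
      have h1 : FreeMonoid.ofList l.reverse * FreeMonoid.of i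
          = FreeMonoid.ofList ((i :: l).reverse) := by
        simp only [List.reverse_cons]
        rfl
      rw [h1, ← Units.val_mul, ← zpow_add]
      congr 2
      simp only [Eexp]
      ring

lemma sigma_single (σ : FreeAlg K I →ₗ[K] FreeAlg K I)
    (hσone : σ 1 = 1)
    (hσtheta : ∀ i : I, σ (theta i) = theta i)
    (hσmul : ∀ (x y : FreeAlg K I) (ν μ : I →₀ ℕ), IsHomog x ν → IsHomog y μ →
      σ (x * y) = ((t ^ (angN form μ ν - angN form ν μ) : Kˣ) : K) • (σ y * σ x))
    (w : FreeMonoid I) :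
    σ (MonoidAlgebra.single w 1) =
      ((t ^ Eexp form w.toList : Kˣ) : K) •
        MonoidAlgebra.single (FreeMonoid.ofList w.toList.reverse) (1 : K) := by
  have := sigma_ofList t form σ hσone hσtheta hσmul w.toList
  rwa [FreeMonoid.ofList_toList] at this

lemma tmul_support (x y : FreeAlg2 K I) :
    ∀ p ∈ (tmul v t form x y).support,
      ∃ p' ∈ x.support, ∃ q ∈ y.support, p = (p'.1 * q.1, p'.2 * q.2) := by
  classical
  intro p hp
  unfold tmul at hp
  have h1 := Finsupp.support_sum hp
  rw [Finset.mem_biUnion] at h1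
  obtain ⟨p', hp', hmem⟩ := h1
  have h2 := Finsupp.support_sum hmem
  rw [Finset.mem_biUnion] at h2
  obtain ⟨q, hq, hmem2⟩ := h2
  have := Finsupp.support_single_subset hmem2
  simp only [Finset.mem_singleton] at this
  exact ⟨p', hp', q, hq, this⟩

lemma r_supp (r : FreeAlg K I →ₗ[K] FreeAlg2 K I)
    (hrone : r 1 = Finsupp.single (1, 1) 1)
    (hrtheta : ∀ i : I, r (theta i) =
      Finsupp.single (FreeMonoid.of i, 1) 1 + Finsupp.single (1, FreeMonoid.of i) 1)
    (hrmul : ∀ x y : FreeAlg K I, r (x * y) = tmul v t form (r x) (r y)) :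
    ∀ l : List I, ∀ p ∈ (r (MonoidAlgebra.single (FreeMonoid.ofList l) (1 : K))).support,
      wdeg p.1 + wdeg p.2 = wdeg (FreeMonoid.ofList l) := by
  classical
  intro l
  induction l with
  | nil =>
      intro p hp
      rw [show (MonoidAlgebra.single (FreeMonoid.ofList ([] : List I)) (1 : K)) = 1 from
        (MonoidAlgebra.one_def).symm, hrone] at hp
      have := Finsupp.support_single_subset hp
      simp only [Finset.mem_singleton] at this
      subst this
      simp [wdeg_one]
  | cons i l ih =>
      intro p hp
      rw [single_cons, hrmul] at hp
      obtain ⟨p', hp', q, hq, rfl⟩ := tmul_support v t form _ _ p hp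
      rw [hrtheta] at hp'
      have hsub := Finsupp.support_add hp'
      rw [Finset.mem_union] at hsub
      have hdeg := ih q hq
      rcases hsub with h | h
      · have := Finsupp.support_single_subset h
        simp only [Finset.mem_singleton] at this
        subst this
        simp only [wdeg_mul, wdeg_of, wdeg_one, one_mul]
        rw [show FreeMonoid.ofList (i :: l) = FreeMonoid.of i * FreeMonoid.ofList l from rfl,
          wdeg_mul, wdeg_of, ← hdeg]
        abel
      · have := Finsupp.support_single_subset h
        simp only [Finset.mem_singleton] at this
        subst this
        simp only [wdeg_mul, wdeg_of, wdeg_one, one_mul]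
        rw [show FreeMonoid.ofList (i :: l) = FreeMonoid.of i * FreeMonoid.ofList l from rfl,
          wdeg_mul, wdeg_of, ← hdeg]
        abel

lemma smul_single_one (c : K) (u : FreeMonoid I) :
    c • (MonoidAlgebra.single u (1 : K)) = MonoidAlgebra.single u c := by
  rw [MonoidAlgebra.smul_single', mul_one]

/-- The key per-basis-element computation. -/
lemma key (σ : FreeAlg K I →ₗ[K] FreeAlg K I)
    (hσone : σ 1 = 1)
    (hσtheta : ∀ i : I, σ (theta i) = theta i)
    (hσmul : ∀ (x y : FreeAlg K I) (ν μ : I →₀ ℕ), IsHomog x ν → IsHomog y μ →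
      σ (x * y) = ((t ^ (angN form μ ν - angN form ν μ) : Kˣ) : K) • (σ y * σ x))
    (i : I) (w₁ w₂ : FreeMonoid I) (a : K) :
    ((t ^ (angN form (wdeg w₁ + wdeg w₂) (Finsupp.single i 1)
        - angN form (Finsupp.single i 1) (wdeg w₁ + wdeg w₂)) : Kˣ) : K) •
      tmul v t form (tensorSigma σ (twflip t form
          (Finsupp.single ((w₁, w₂) : FreeMonoid I × FreeMonoid I) a)))
        (Finsupp.single ((FreeMonoid.of i, 1) : FreeMonoid I × FreeMonoid I) 1
          + Finsupp.single ((1, FreeMonoid.of i) : FreeMonoid I × FreeMonoid I) 1)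
    = tensorSigma σ (twflip t form (tmul v t form
        (Finsupp.single ((FreeMonoid.of i, 1) : FreeMonoid I × FreeMonoid I) 1
          + Finsupp.single ((1, FreeMonoid.of i) : FreeMonoid I × FreeMonoid I) 1)
        (Finsupp.single ((w₁, w₂) : FreeMonoid I × FreeMonoid I) a))) := by
  have hsig := sigma_single t form σ hσone hσtheta hσmul
  have ht : (t : K) ≠ 0 := t.ne_zero
  have hv : (v : K) ≠ 0 := v.ne_zero
  rw [twflip_single, tensorSigma_single]
  simp only
  rw [hsig w₂, hsig w₁, smul_single_one, smul_single_one, outer_single_single,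
    tmul_smul_left, tmul_add_right, tmul_single_single, tmul_single_single]
  rw [tmul_add_left, tmul_single_single, tmul_single_single,
    twflip_add, twflip_single, twflip_single,
    tensorSigma_add, tensorSigma_single, tensorSigma_single]
  simp only [one_mul, mul_one, wdeg_one, wdeg_of, wdeg_rev]
  rw [hsig w₂, hsig (FreeMonoid.of i * w₁), hsig (FreeMonoid.of i * w₂), hsig w₁,
    smul_single_one, smul_single_one, smul_single_one, smul_single_one,
    outer_single_single, outer_single_single]
  simp only [FreeMonoid.toList_mul, FreeMonoid.toList_of, List.singleton_append,
    List.reverse_cons, Eexp, FreeMonoid.ofList_toList]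
  simp only [List.nil_append, FreeMonoid.ofList_append, FreeMonoid.ofList_singleton,
    FreeMonoid.ofList_toList, wdeg_mul, wdeg_of, dotN,
    angN_zero_left, angN_zero_right, add_zero, zero_add, sub_zero, zero_sub,
    zpow_zero, mul_one, one_mul, Units.val_mul, Units.val_one,
    smul_add, Finsupp.smul_single, smul_eq_mul]
  conv_rhs => rw [add_comm]
  congr 1
  · congr 1
    simp only [Units.val_mul, Units.val_zpow_eq_zpow_val, angN_add_left, angN_add_right,
      zpow_add₀ ht, zpow_sub₀ ht, zpow_add₀ hv, div_eq_mul_inv]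
    ring
  · congr 1
    simp only [Units.val_mul, Units.val_zpow_eq_zpow_val, angN_add_left, angN_add_right,
      zpow_add₀ ht, zpow_sub₀ ht, zpow_add₀ hv, div_eq_mul_inv]
    ring

end Aux

/-- `r(σ(x)) = (σ⊗σ)(ρ(r(x)))` for all `x ∈ 'f`, where `r` is the algebra
map into the twisted tensor product with `r(θ_i) = θ_i⊗1 + 1⊗θ_i`. -/
theorem r_sigma {I : Type*} [Fintype I] [DecidableEq I] {K : Type*} [Field K]
    (v t : Kˣ) (form : I → I → ℤ)
    (σ : FreeAlg K I →ₗ[K] FreeAlg K I)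
    (hσone : σ 1 = 1)
    (hσtheta : ∀ i : I, σ (theta i) = theta i)
    (hσmul : ∀ (x y : FreeAlg K I) (ν μ : I →₀ ℕ), IsHomog x ν → IsHomog y μ →
      σ (x * y) = ((t ^ (angN form μ ν - angN form ν μ) : Kˣ) : K) • (σ y * σ x))
    (r : FreeAlg K I →ₗ[K] FreeAlg2 K I)
    (hrone : r 1 = Finsupp.single (1, 1) 1)
    (hrtheta : ∀ i : I, r (theta i) =
      Finsupp.single (FreeMonoid.of i, 1) 1 + Finsupp.single (1, FreeMonoid.of i) 1)
    (hrmul : ∀ x y : FreeAlg K I, r (x * y) = tmul v t form (r x) (r y)) :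
    ∀ x : FreeAlg K I, r (σ x) = tensorSigma σ (twflip t form (r x)) := by
  classical
  have main : ∀ l : List I,
      r (σ (MonoidAlgebra.single (FreeMonoid.ofList l) 1)) =
        tensorSigma σ (twflip t form (r (MonoidAlgebra.single (FreeMonoid.ofList l) 1))) := by
    intro l
    induction l with
    | nil =>
        rw [show (MonoidAlgebra.single (FreeMonoid.ofList ([] : List I)) (1 : K)) = 1 from
          (MonoidAlgebra.one_def).symm, hσone, hrone, twflip_single]
        rw [tensorSigma_single]
        simp only [wdeg_one, angN_zero_left, angN_zero_right, sub_zero, zpow_zero,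
          Units.val_one, mul_one]
        rw [← MonoidAlgebra.one_def, hσone, MonoidAlgebra.one_def, outer_single_single]
        simp
    | cons i l ih =>
        rw [single_cons,
          hσmul (theta i) _ (Finsupp.single i 1) (wdeg (FreeMonoid.ofList l))
            (isHomog_theta i) (isHomog_single _),
          hσtheta, map_smul, hrmul, ih, hrmul]
        set z := r (MonoidAlgebra.single (FreeMonoid.ofList l) 1) with hz
        have hzdeg : ∀ p ∈ z.support, wdeg p.1 + wdeg p.2 = wdeg (FreeMonoid.ofList l) :=
          r_supp v t form r hrone hrtheta hrmul l
        set C : K := ((t ^ (angN form (wdeg (FreeMonoid.ofList l)) (Finsupp.single i 1)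
            - angN form (Finsupp.single i 1) (wdeg (FreeMonoid.ofList l))) : Kˣ) : K) with hC
        -- functorial forms
        let F1 : FreeAlg2 K I →+ FreeAlg2 K I :=
          { toFun := fun z => C • tmul v t form (tensorSigma σ (twflip t form z)) (r (theta i))
            map_zero' := by
              show C • tmul v t form (tensorSigma σ (twflip t form 0)) (r (theta i)) = 0
              rw [twflip_zero, tensorSigma_zero, tmul_zero_left, smul_zero]
            map_add' := fun z z' => by
              show C • tmul v t form (tensorSigma σ (twflip t form (z + z'))) (r (theta i)) = _
              rw [twflip_add, tensorSigma_add, tmul_add_left, smul_add] }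
        let F2 : FreeAlg2 K I →+ FreeAlg2 K I :=
          { toFun := fun z => tensorSigma σ (twflip t form (tmul v t form (r (theta i)) z))
            map_zero' := by
              show tensorSigma σ (twflip t form (tmul v t form (r (theta i)) 0)) = 0
              rw [tmul_zero_right, twflip_zero, tensorSigma_zero]
            map_add' := fun z z' => by
              show tensorSigma σ (twflip t form (tmul v t form (r (theta i)) (z + z'))) = _
              rw [tmul_add_right, twflip_add, tensorSigma_add] }
        show F1 z = F2 z
        conv_lhs => rw [← Finsupp.sum_single z]
        conv_rhs => rw [← Finsupp.sum_single z]
        rw [map_finsuppSum, map_finsuppSum]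
        refine Finsupp.sum_congr fun p hp => ?_
        show C • tmul v t form (tensorSigma σ (twflip t form (Finsupp.single p (z p))))
            (r (theta i))
          = tensorSigma σ (twflip t form (tmul v t form (r (theta i)) (Finsupp.single p (z p))))
        rw [hrtheta, hC, ← hzdeg p hp]
        exact key v t form σ hσone hσtheta hσmul i p.1 p.2 (z p)
  intro x
  induction x using MonoidAlgebra.induction_linear with
  | zero => rw [map_zero, map_zero, twflip_zero, tensorSigma_zero]
  | add f g hf hg =>
      rw [map_add, map_add, map_add, hf, hg, twflip_add, tensorSigma_add]
  | single w b =>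
      have hw : (MonoidAlgebra.single w b : FreeAlg K I)
          = b • MonoidAlgebra.single w (1 : K) := by
        rw [smul_single_one]
      rw [hw, map_smul, map_smul, map_smul, twflip_smul, tensorSigma_smul]
      congr 1
      have := main w.toList
      rwa [FreeMonoid.ofList_toList] at this

end
end

section
/- In U_{v,t}, for every homogeneous x ∈ f and every i ∈ I, the commutator identity x⁺F_i − F_ix⁺ = (r_i⁺(x⁺)K_i − K'_i(_ir⁺(x⁺)))/(v_i − v_i^{−1}) holds. -/
noncomputable section

/-- in `U_{v,t}`, for homogeneous `x ∈ f` and `i ∈ I`,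
`x⁺F_i − F_ix⁺ = (r_i⁺(x⁺)K_i − K'_i(_ir⁺(x⁺)))/(v_i − v_i^{−1})`. -/
theorem commutator_with_F {I : Type*} [Fintype I] [DecidableEq I] {K : Type*} [Field K]
    (v t : Kˣ) (form : I → I → ℤ)
    (dh : I → ℤ) (hdh : ∀ i, 2 * dh i = dotN form (Finsupp.single i 1) (Finsupp.single i 1))
    {U : Type*} [Ring U] [Algebra K U]
    (E Fg : I → U) (Kk Kk' : I → Uˣ)
    -- the relations (R2) of U_{v,t}
    (hKE : ∀ i j, (Kk i : U) * E j =
      ((v ^ dotN form (Finsupp.single i 1) (Finsupp.single j 1) *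
        t ^ (angN form (Finsupp.single j 1) (Finsupp.single i 1) -
             angN form (Finsupp.single i 1) (Finsupp.single j 1)) : Kˣ) : K) • (E j * (Kk i : U)))
    (hK'E : ∀ i j, (Kk' i : U) * E j =
      ((v ^ (-(dotN form (Finsupp.single i 1) (Finsupp.single j 1))) *
        t ^ (angN form (Finsupp.single j 1) (Finsupp.single i 1) -
             angN form (Finsupp.single i 1) (Finsupp.single j 1)) : Kˣ) : K) • (E j * (Kk' i : U)))
    (hK'F : ∀ i j, (Kk' i : U) * Fg j =
      ((v ^ dotN form (Finsupp.single i 1) (Finsupp.single j 1) *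
        t ^ (angN form (Finsupp.single i 1) (Finsupp.single j 1) -
             angN form (Finsupp.single j 1) (Finsupp.single i 1)) : Kˣ) : K) • (Fg j * (Kk' i : U)))
    (hKF : ∀ i j, (Kk i : U) * Fg j =
      ((v ^ (-(dotN form (Finsupp.single i 1) (Finsupp.single j 1))) *
        t ^ (angN form (Finsupp.single i 1) (Finsupp.single j 1) -
             angN form (Finsupp.single j 1) (Finsupp.single i 1)) : Kˣ) : K) • (Fg j * (Kk i : U)))
    -- the relation (R3) of U_{v,t}
    (hEF : ∀ i j, E i * Fg j - Fg j * E i =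
      if i = j then
        (((v ^ dh i : Kˣ) : K) - ((v ^ dh i : Kˣ) : K)⁻¹)⁻¹ • (((Kk i : U)) - ((Kk' i : U)))
      else 0)
    (plus : FreeAlg K I →ₐ[K] U)
    (hplusθ : ∀ i, plus (theta i) = E i)
    -- the twisted derivations r_i (= R) and _ir (= L) on f
    (R L : I → FreeAlg K I →ₗ[K] FreeAlg K I)
    (hR1 : ∀ i, R i 1 = 0)
    (hRθ : ∀ i j, R i (theta j) = if i = j then 1 else 0)
    (hRmul : ∀ (i : I) (x y : FreeAlg K I) (ν μ : I →₀ ℕ), IsHomog x ν → IsHomog y μ →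
      R i (x * y) =
        ((v ^ dotN form (Finsupp.single i 1) μ *
          t ^ (angN form μ (Finsupp.single i 1) - angN form (Finsupp.single i 1) μ) : Kˣ) : K) •
          (R i x * y) + x * R i y)
    (hL1 : ∀ i, L i 1 = 0)
    (hLθ : ∀ i j, L i (theta j) = if i = j then 1 else 0)
    (hLmul : ∀ (i : I) (x y : FreeAlg K I) (ν μ : I →₀ ℕ), IsHomog x ν → IsHomog y μ →
      L i (x * y) =
        L i x * y +
        ((v ^ dotN form (Finsupp.single i 1) ν *
          t ^ (angN form (Finsupp.single i 1) ν - angN form ν (Finsupp.single i 1)) : Kˣ) : K) •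
          (x * L i y)) :
    ∀ (x : FreeAlg K I) (ν : I →₀ ℕ), IsHomog x ν → ∀ i : I,
      plus x * Fg i - Fg i * plus x =
        (((v ^ dh i : Kˣ) : K) - ((v ^ dh i : Kˣ) : K)⁻¹)⁻¹ •
          (plus (R i x) * (Kk i : U) - (Kk' i : U) * plus (L i x)) := by
  classical
  -- abbreviation for the canonical monoid map into the monoid algebra
  set ofm : FreeMonoid I →* FreeAlg K I := MonoidAlgebra.of K (FreeMonoid I) with hofm_def
  -- scalar arithmetic helpers
  have unit_mul : ∀ (a b e f : ℤ), ((v ^ (a+b) * t ^ (e+f) : Kˣ) : K)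
      = ((v^a * t^e : Kˣ):K) * ((v^b * t^f : Kˣ):K) := by
    intro a b e f; rw [zpow_add, zpow_add]; push_cast; ring
  have ang_zero_right : ∀ ν : I →₀ ℕ, angN form ν 0 = 0 := by intro ν; simp [angN]
  have ang_zero_left : ∀ ν : I →₀ ℕ, angN form 0 ν = 0 := by intro ν; simp [angN]
  have ang_add_right : ∀ ν μ₁ μ₂ : I →₀ ℕ,
      angN form ν (μ₁ + μ₂) = angN form ν μ₁ + angN form ν μ₂ := by
    intro ν μ₁ μ₂
    simp only [angN]
    rw [← Finsupp.sum_add]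
    apply Finsupp.sum_congr
    intro i _
    rw [Finsupp.sum_add_index']
    · intro j; push_cast; ring
    · intro j b₁ b₂; push_cast; ring
  have ang_add_left : ∀ ν μ₁ μ₂ : I →₀ ℕ,
      angN form (μ₁ + μ₂) ν = angN form μ₁ ν + angN form μ₂ ν := by
    intro ν μ₁ μ₂
    simp only [angN]
    rw [Finsupp.sum_add_index']
    · intro j; simp [Finsupp.sum]
    · intro j b₁ b₂
      rw [← Finsupp.sum_add]
      apply Finsupp.sum_congr
      intro k _; push_cast; ring
  have dot_zero : ∀ i : I, dotN form (Finsupp.single i 1) 0 = 0 := by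
    intro i; simp [dotN, ang_zero_left, ang_zero_right]
  have dot_add : ∀ (i : I) (μ₁ μ₂ : I →₀ ℕ),
      dotN form (Finsupp.single i 1) (μ₁ + μ₂)
        = dotN form (Finsupp.single i 1) μ₁ + dotN form (Finsupp.single i 1) μ₂ := by
    intro i μ₁ μ₂; simp only [dotN, ang_add_left, ang_add_right]; ring
  -- weight helpers
  have wdeg_one : wdeg (1 : FreeMonoid I) = 0 := by simp [wdeg]
  have wdeg_cons : ∀ (j : I) (w : FreeMonoid I),
      wdeg (FreeMonoid.of j * w) = Finsupp.single j 1 + wdeg w := by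
    intro j w; simp [wdeg]
  have hofm_homog : ∀ w : FreeMonoid I, IsHomog (ofm w) (wdeg w) := by
    intro w u hu
    have : u = w := by
      simpa [hofm_def, MonoidAlgebra.of_apply, MonoidAlgebra.coeff_single,
        Finsupp.support_single_ne_zero _ (one_ne_zero (α := K))] using hu
    rw [this]
  have htheta : ∀ j : I, theta j = ofm (FreeMonoid.of j) := fun _ => rfl
  have htheta_homog : ∀ j : I, IsHomog (theta (K := K) j) (Finsupp.single j 1) := by
    intro j
    rw [htheta]
    have := hofm_homog (FreeMonoid.of j)
    rwa [show wdeg (FreeMonoid.of j) = Finsupp.single j 1 by simp [wdeg]] at this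
  -- commutation of K_i with a homogeneous monomial image
  have keyK : ∀ (i : I) (w : FreeMonoid I), (Kk i : U) * plus (ofm w)
      = ((v ^ dotN form (Finsupp.single i 1) (wdeg w) *
          t ^ (angN form (wdeg w) (Finsupp.single i 1) -
               angN form (Finsupp.single i 1) (wdeg w)) : Kˣ) : K) • (plus (ofm w) * (Kk i : U)) := by
    intro i w
    induction w using FreeMonoid.recOn with
    | one =>
      simp [wdeg_one, dot_zero, ang_zero_left, ang_zero_right]
    | of_mul j w ihw =>
      rw [map_mul, map_mul, ← htheta, hplusθ]
      calc (Kk i : U) * (E j * plus (ofm w)) = ((Kk i : U) * E j) * plus (ofm w) := by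
            rw [mul_assoc]
        _ = ((v ^ dotN form (Finsupp.single i 1) (Finsupp.single j 1) *
              t ^ (angN form (Finsupp.single j 1) (Finsupp.single i 1) -
                   angN form (Finsupp.single i 1) (Finsupp.single j 1)) : Kˣ) : K) •
              (E j * ((Kk i : U) * plus (ofm w))) := by
            rw [hKE i j, smul_mul_assoc, mul_assoc]
        _ = _ := by
            rw [ihw, mul_smul_comm, smul_smul, wdeg_cons, dot_add, ang_add_left, ang_add_right,
              ← unit_mul]
            ring_nf
            rw [← mul_assoc]
  have keyK' : ∀ (i : I) (w : FreeMonoid I), (Kk' i : U) * plus (ofm w)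
      = ((v ^ (-(dotN form (Finsupp.single i 1) (wdeg w))) *
          t ^ (angN form (wdeg w) (Finsupp.single i 1) -
               angN form (Finsupp.single i 1) (wdeg w)) : Kˣ) : K) • (plus (ofm w) * (Kk' i : U)) := by
    intro i w
    induction w using FreeMonoid.recOn with
    | one =>
      simp [wdeg_one, dot_zero, ang_zero_left, ang_zero_right]
    | of_mul j w ihw =>
      rw [map_mul, map_mul, ← htheta, hplusθ]
      calc (Kk' i : U) * (E j * plus (ofm w)) = ((Kk' i : U) * E j) * plus (ofm w) := by
            rw [mul_assoc]
        _ = ((v ^ (-(dotN form (Finsupp.single i 1) (Finsupp.single j 1))) *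
              t ^ (angN form (Finsupp.single j 1) (Finsupp.single i 1) -
                   angN form (Finsupp.single i 1) (Finsupp.single j 1)) : Kˣ) : K) •
              (E j * ((Kk' i : U) * plus (ofm w))) := by
            rw [hK'E i j, smul_mul_assoc, mul_assoc]
        _ = _ := by
            rw [ihw, mul_smul_comm, smul_smul, wdeg_cons, dot_add, ang_add_left, ang_add_right,
              neg_add, ← unit_mul]
            ring_nf
            rw [← mul_assoc]
  -- swapping E_j past K'_i
  have EK' : ∀ (i j : I), E j * (Kk' i : U)
      = ((v ^ dotN form (Finsupp.single i 1) (Finsupp.single j 1) *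
          t ^ (angN form (Finsupp.single i 1) (Finsupp.single j 1) -
               angN form (Finsupp.single j 1) (Finsupp.single i 1)) : Kˣ) : K) •
          ((Kk' i : U) * E j) := by
    intro i j
    rw [hK'E i j, smul_smul]
    rw [show angN form (Finsupp.single i 1) (Finsupp.single j 1) -
          angN form (Finsupp.single j 1) (Finsupp.single i 1)
        = -(angN form (Finsupp.single j 1) (Finsupp.single i 1) -
          angN form (Finsupp.single i 1) (Finsupp.single j 1)) by ring]
    rw [← Units.val_mul]
    rw [show (v ^ dotN form (Finsupp.single i 1) (Finsupp.single j 1) *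
          t ^ (-(angN form (Finsupp.single j 1) (Finsupp.single i 1) -
          angN form (Finsupp.single i 1) (Finsupp.single j 1)))) *
        (v ^ (-(dotN form (Finsupp.single i 1) (Finsupp.single j 1))) *
          t ^ (angN form (Finsupp.single j 1) (Finsupp.single i 1) -
          angN form (Finsupp.single i 1) (Finsupp.single j 1))) = (1 : Kˣ) by
      rw [mul_mul_mul_comm, ← zpow_add, ← zpow_add]; simp]
    rw [Units.val_one, one_smul]
  have step1 : ∀ (X Y Z : U), X * Y * Z - Z * (X * Y)
      = X * (Y * Z - Z * Y) + (X * Z - Z * X) * Y := by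
    intro X Y Z; noncomm_ring
  -- the statement for monomials
  have key : ∀ (w : FreeMonoid I) (i : I),
      plus (ofm w) * Fg i - Fg i * plus (ofm w) =
        (((v ^ dh i : Kˣ) : K) - ((v ^ dh i : Kˣ) : K)⁻¹)⁻¹ •
          (plus (R i (ofm w)) * (Kk i : U) - (Kk' i : U) * plus (L i (ofm w))) := by
    intro w
    induction w using FreeMonoid.recOn with
    | one =>
      intro i
      simp [hR1, hL1]
    | of_mul j w ihw =>
      intro i
      have hRw := hRmul i (theta j) (ofm w) _ _ (htheta_homog j) (hofm_homog w)
      have hLw := hLmul i (theta j) (ofm w) _ _ (htheta_homog j) (hofm_homog w)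
      rw [map_mul, ← htheta, hRw, hLw, hRθ, hLθ, map_mul, hplusθ]
      rw [step1 (E j) (plus (ofm w)) (Fg i), ihw i, hEF j i]
      by_cases hji : i = j
      · subst hji
        rw [if_pos rfl]
        simp only [if_true, map_add, map_smul, map_mul, hplusθ, map_one, one_mul]
        simp only [mul_sub, sub_mul, smul_sub, smul_add, mul_add, add_mul,
          mul_smul_comm, smul_mul_assoc, smul_smul, ← mul_assoc]
        rw [keyK i w, EK' i i]
        simp only [mul_smul_comm, smul_mul_assoc, smul_smul, ← mul_assoc]
        module
      · rw [if_neg (show ¬ j = i from fun h => hji h.symm)]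
        simp only [hji, if_false, zero_mul, smul_zero, zero_add, map_add, map_smul, map_mul,
          hplusθ, map_zero, zero_smul, mul_zero, add_zero]
        simp only [mul_sub, sub_mul, smul_sub, smul_add, mul_add, add_mul,
          mul_smul_comm, smul_mul_assoc, smul_smul, ← mul_assoc]
        rw [EK' i j]
        simp only [mul_smul_comm, smul_mul_assoc, smul_smul, ← mul_assoc]
  -- now extend by linearity
  intro x
  induction x using MonoidAlgebra.induction with
  | zero =>
    intro ν _ i
    simp
  | single_add w b f hw hb ih =>
    intro ν hx i
    have hsupp : ((MonoidAlgebra.single w b : FreeAlg K I) + f).coeff.support = insert w f.coeff.support := by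
      rw [MonoidAlgebra.coeff_add, MonoidAlgebra.coeff_single, Finsupp.support_add_eq, Finsupp.support_single_ne_zero _ hb]
      · rw [Finset.insert_eq]
      · rw [Finsupp.support_single_ne_zero _ hb]; simpa using hw
    have hfν : IsHomog f ν := by
      intro u hu
      exact hx u (by rw [hsupp]; exact Finset.mem_insert_of_mem hu)
    have hsingle : (MonoidAlgebra.single w b : FreeAlg K I) = b • ofm w := by
      rw [hofm_def, MonoidAlgebra.of_apply, MonoidAlgebra.smul_single', mul_one]
    rw [hsingle]
    simp only [map_add, map_smul]
    have h1 := key w i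
    have h2 := ih ν hfν i
    have expand : ∀ (P Q : U), (b • P + Q) * Fg i - Fg i * (b • P + Q)
        = b • (P * Fg i - Fg i * P) + (Q * Fg i - Fg i * Q) := by
      intro P Q
      simp only [add_mul, mul_add, smul_mul_assoc, mul_smul_comm, smul_sub]
      module
    rw [expand, h1, h2]
    simp only [smul_sub, smul_add, mul_add, add_mul, smul_mul_assoc, mul_smul_comm, smul_smul]
    module

end
end
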